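/- Let n ≥ 1 and let g be a (2n+1)×(2n+1) complex matrix with gᴴ 𝕁 g = 𝕁 and det g = 1. Then g maps every n-dimensional 𝕁-isotropic subspace V of ℂ^(2n+1) onto itself (i.e. the image of V under x ↦ g *ᵥ x equals V for every such V) if and only if g = β • 1 is a scalar multiple of the identity with β^(2n+1) = 1. In other words, the kernel of the action of SU(𝕁) on the space of n-dimensional 𝕁-isotropic subspaces is the cyclic group ℤ_(2n+1) of scalar matrices whose scalar is a (2n+1)-st root of unity. -/

import Mathlib

open Matrix

noncomputable section

/-- Index type for `ℂ^(2n+1)`: `Fin n ⊕ Fin 1 ⊕ Fin n`. -/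
abbrev Idx (n : ℕ) := Fin n ⊕ Fin 1 ⊕ Fin n

/-- The Hermitian matrix `𝕁` whose 3×3 block form has the `n×n` identity in blocks
(1,3) and (3,1), the entry `1` in the middle (2,2) position, and zeros elsewhere. -/
def Jmat (n : ℕ) : Matrix (Idx n) (Idx n) ℂ :=
  Matrix.of fun i j =>
    match i, j with
    | Sum.inl a, Sum.inr (Sum.inr b) => if a = b then 1 else 0
    | Sum.inr (Sum.inr a), Sum.inl b => if a = b then 1 else 0
    | Sum.inr (Sum.inl _), Sum.inr (Sum.inl _) => 1
    | _, _ => 0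

/-- The Hermitian form `h(x,y) = (star x) ⬝ᵥ (𝕁 *ᵥ y)`, conjugate-linear in the
first argument. -/
def hform {n : ℕ} (x y : Idx n → ℂ) : ℂ := star x ⬝ᵥ (Jmat n *ᵥ y)

/-- A subspace `V ⊆ ℂ^(2n+1)` is `𝕁`-isotropic if `h(x,y) = 0` for all `x, y ∈ V`. -/
def IsIsotropic {n : ℕ} (V : Submodule ℂ (Idx n → ℂ)) : Prop :=
  ∀ x ∈ V, ∀ y ∈ V, hform x y = 0

namespace KernelAux

variable {n : ℕ}

/-- standard basis vectors of the first block -/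
def E (i : Fin n) : Idx n → ℂ := Pi.single (Sum.inl i) 1
/-- standard basis vectors of the third block -/
def F (i : Fin n) : Idx n → ℂ := Pi.single (Sum.inr (Sum.inr i)) 1
/-- the middle standard basis vector -/
def Mv : Idx n → ℂ := Pi.single (Sum.inr (Sum.inl 0)) 1

lemma hform_apply (x y : Idx n → ℂ) :
    hform x y = (∑ a, star (x (Sum.inl a)) * y (Sum.inr (Sum.inr a)))
      + star (x (Sum.inr (Sum.inl 0))) * y (Sum.inr (Sum.inl 0))
      + ∑ a, star (x (Sum.inr (Sum.inr a))) * y (Sum.inl a) := by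
  simp only [hform, dotProduct, mulVec, Jmat, Fintype.sum_sum_type, Fin.sum_univ_one,
    Matrix.of_apply, Pi.star_apply]
  rw [add_assoc]
  congr 1
  · apply Finset.sum_congr rfl; intro a _
    simp [dotProduct, Fintype.sum_sum_type, ite_mul, Finset.sum_ite_eq]
  congr 1
  · simp [dotProduct, Fintype.sum_sum_type, Fin.sum_univ_one]
  · apply Finset.sum_congr rfl; intro a _
    simp [dotProduct, Fintype.sum_sum_type, ite_mul, Finset.sum_ite_eq]

lemma hform_add_left (x x' y : Idx n → ℂ) :
    hform (x + x') y = hform x y + hform x' y := by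
  simp [hform, star_add, add_dotProduct]

lemma hform_sub_left (x x' y : Idx n → ℂ) :
    hform (x - x') y = hform x y - hform x' y := by
  simp [hform, star_sub, sub_dotProduct]

lemma hform_smul_left (c : ℂ) (x y : Idx n → ℂ) :
    hform (c • x) y = star c * hform x y := by
  simp [hform, star_smul, smul_dotProduct, smul_eq_mul]

lemma hform_add_right (x y y' : Idx n → ℂ) :
    hform x (y + y') = hform x y + hform x y' := by
  simp [hform, mulVec_add, dotProduct_add]

lemma hform_sub_right (x y y' : Idx n → ℂ) :
    hform x (y - y') = hform x y - hform x y' := by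
  simp [hform, mulVec_sub, dotProduct_sub]

lemma hform_smul_right (c : ℂ) (x y : Idx n → ℂ) :
    hform x (c • y) = c * hform x y := by
  simp [hform, mulVec_smul, dotProduct_smul, smul_eq_mul]

lemma hform_zero_left (y : Idx n → ℂ) : hform 0 y = 0 := by simp [hform]

lemma hform_zero_right (x : Idx n → ℂ) : hform x 0 = 0 := by simp [hform]

lemma hEE (i j : Fin n) : hform (E i) (E j) = 0 := by
  simp [hform_apply, E, Pi.single_apply]

lemma hFF (i j : Fin n) : hform (F i) (F j) = 0 := by
  simp [hform_apply, F, Pi.single_apply]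

lemma hEF (i j : Fin n) : hform (E i) (F j) = if i = j then 1 else 0 := by
  simp [hform_apply, E, F, Pi.single_apply, Finset.sum_ite_eq, eq_comm]

lemma hFE (i j : Fin n) : hform (F i) (E j) = if i = j then 1 else 0 := by
  simp [hform_apply, E, F, Pi.single_apply, Finset.sum_ite_eq, eq_comm]

lemma hEM (i : Fin n) : hform (E i) Mv = 0 := by
  simp [hform_apply, E, Mv, Pi.single_apply]

lemma hME (i : Fin n) : hform Mv (E i) = 0 := by
  simp [hform_apply, E, Mv, Pi.single_apply]

lemma hFM (i : Fin n) : hform (F i) Mv = 0 := by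
  simp [hform_apply, F, Mv, Pi.single_apply]

lemma hMF (i : Fin n) : hform Mv (F i) = 0 := by
  simp [hform_apply, F, Mv, Pi.single_apply]

lemma hMM : hform (Mv (n := n)) Mv = 1 := by
  simp [hform_apply, Mv, Pi.single_apply]

variable {u : Fin n → Idx n → ℂ} {p : Fin n → Idx n}

lemma mem_span_pivots (hp : ∀ k l, u k (p l) = if k = l then 1 else 0)
    {x : Idx n → ℂ} (hx : x ∈ Submodule.span ℂ (Set.range u)) :
    ∑ k, x (p k) • u k = x := by
  rw [Submodule.mem_span_range_iff_exists_fun] at hx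
  obtain ⟨c, rfl⟩ := hx
  have hcl : ∀ l, (∑ k, c k • u k) (p l) = c l := by
    intro l
    simp only [Finset.sum_apply, Pi.smul_apply, smul_eq_mul, hp, mul_ite, mul_one, mul_zero]
    simp [Finset.sum_ite_eq']
  simp only [hcl]

lemma finrank_span_pivots (hp : ∀ k l, u k (p l) = if k = l then 1 else 0) :
    Module.finrank ℂ (Submodule.span ℂ (Set.range u)) = n := by
  have hli : LinearIndependent ℂ u := by
    rw [Fintype.linearIndependent_iff]
    intro c hc l
    have := congrFun hc (p l)
    simpa [Finset.sum_apply, hp, Finset.sum_ite_eq'] using this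
  simpa using finrank_span_eq_card hli

lemma isIsotropic_span (h0 : ∀ k l, hform (u k) (u l) = 0) :
    IsIsotropic (Submodule.span ℂ (Set.range u)) := by
  have key' : ∀ (x : Idx n → ℂ), (∀ k, hform x (u k) = 0) →
      ∀ (d : Fin n → ℂ) (s : Finset (Fin n)), hform x (∑ k ∈ s, d k • u k) = 0 := by
    intro x hx d s
    induction s using Finset.induction with
    | empty => simpa using hform_zero_right x
    | insert _ _ h ih =>
      rw [Finset.sum_insert h, hform_add_right, hform_smul_right, hx, ih, mul_zero, add_zero]
  have key : ∀ (y : Idx n → ℂ), (∀ k, hform (u k) y = 0) →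
      ∀ (c : Fin n → ℂ) (s : Finset (Fin n)), hform (∑ k ∈ s, c k • u k) y = 0 := by
    intro y hy c s
    induction s using Finset.induction with
    | empty => simpa using hform_zero_left y
    | insert _ _ h ih =>
      rw [Finset.sum_insert h, hform_add_left, hform_smul_left, hy, ih, mul_zero, add_zero]
  intro x hx y hy
  rw [Submodule.mem_span_range_iff_exists_fun] at hx hy
  obtain ⟨c, rfl⟩ := hx
  obtain ⟨d, rfl⟩ := hy
  exact key _ (fun k => key' _ (fun l => h0 k l) d _) c _

/-- The main extraction step: if `g` maps every `n`-dimensional isotropic subspace onto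
itself, then for any pivoted isotropic family `u` and any `x` in its span, the vector
`g *ᵥ x` satisfies the span-representation identity. -/
lemma step (g : Matrix (Idx n) (Idx n) ℂ)
    (H : ∀ V : Submodule ℂ (Idx n → ℂ),
        Module.finrank ℂ V = n → IsIsotropic V →
        V.map (Matrix.mulVecLin g) = V)
    (hp : ∀ k l, u k (p l) = if k = l then 1 else 0)
    (hiso : ∀ k l, hform (u k) (u l) = 0)
    {x : Idx n → ℂ} (hx : x ∈ Submodule.span ℂ (Set.range u)) (q : Idx n) :
    ∑ k, (g *ᵥ x) (p k) * u k q = (g *ᵥ x) q := by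
  have hVm := H _ (finrank_span_pivots hp) (isIsotropic_span hiso)
  have hmem : g *ᵥ x ∈ Submodule.span ℂ (Set.range u) := by
    rw [← hVm]
    exact ⟨x, hx, rfl⟩
  have := congrFun (mem_span_pivots hp hmem) q
  simpa [Finset.sum_apply] using this
@[simp] lemma E_apply_inl (k l : Fin n) : E k (Sum.inl l) = if k = l then 1 else 0 := by
  simp [E, Pi.single_apply, eq_comm]
@[simp] lemma E_apply_m (k : Fin n) (t : Fin 1) : E k (Sum.inr (Sum.inl t)) = 0 := by
  simp [E, Pi.single_apply]
@[simp] lemma E_apply_inr (k l : Fin n) : E k (Sum.inr (Sum.inr l)) = 0 := by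
  simp [E, Pi.single_apply]
@[simp] lemma F_apply_inr (k l : Fin n) : F k (Sum.inr (Sum.inr l)) = if k = l then 1 else 0 := by
  simp [F, Pi.single_apply, eq_comm]
@[simp] lemma F_apply_m (k : Fin n) (t : Fin 1) : F k (Sum.inr (Sum.inl t)) = 0 := by
  simp [F, Pi.single_apply]
@[simp] lemma F_apply_inl (k l : Fin n) : F k (Sum.inl l) = 0 := by
  simp [F, Pi.single_apply]
@[simp] lemma Mv_apply_m (t : Fin 1) : Mv (n := n) (Sum.inr (Sum.inl t)) = 1 := by
  simp [Mv, Pi.single_apply, Subsingleton.elim t 0]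
@[simp] lemma Mv_apply_inl (l : Fin n) : Mv (n := n) (Sum.inl l) = 0 := by
  simp [Mv, Pi.single_apply]
@[simp] lemma Mv_apply_inr (l : Fin n) : Mv (n := n) (Sum.inr (Sum.inr l)) = 0 := by
  simp [Mv, Pi.single_apply]

end KernelAux

open KernelAux in
/-- a special pseudo-unitary matrix `g` fixes every `n`-dimensional
`𝕁`-isotropic subspace iff `g = β • 1` with `β^(2n+1) = 1`; i.e. the kernel of
the action on the space of such subspaces is `ℤ_(2n+1)`. -/
theorem kernel_of_action (n : ℕ) (hn : 1 ≤ n)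
    (g : Matrix (Idx n) (Idx n) ℂ)
    (hg : gᴴ * Jmat n * g = Jmat n) (hdet : g.det = 1) :
    (∀ V : Submodule ℂ (Idx n → ℂ),
        Module.finrank ℂ V = n → IsIsotropic V →
        V.map (Matrix.mulVecLin g) = V) ↔
      ∃ β : ℂ, β ^ (2 * n + 1) = 1 ∧ g = β • (1 : Matrix (Idx n) (Idx n) ℂ) := by
  constructor
  · intro H
    have hpE : ∀ k l : Fin n, E k (Sum.inl l) = if k = l then 1 else 0 := by
      intro k l; simp [E, Pi.single_apply, eq_comm]
    have hisoE : ∀ k l : Fin n, hform (E k) (E l) = 0 := fun k l => hEE k l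
    have fact1 : ∀ (t : Fin 1) (k : Fin n), g (Sum.inr (Sum.inl t)) (Sum.inl k) = 0 := by
      intro t k
      have h := step g H hpE hisoE (Submodule.subset_span (Set.mem_range_self k))
        (Sum.inr (Sum.inl t))
      simpa [E, mulVec_single, Pi.single_apply] using h.symm
    have fact2 : ∀ (b k : Fin n), g (Sum.inr (Sum.inr b)) (Sum.inl k) = 0 := by
      intro b k
      have h := step g H hpE hisoE (Submodule.subset_span (Set.mem_range_self k))
        (Sum.inr (Sum.inr b))
      simpa [E, mulVec_single, Pi.single_apply] using h.symm
    have hpF : ∀ k l : Fin n, F k (Sum.inr (Sum.inr l)) = if k = l then 1 else 0 := by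
      intro k l; simp [F, Pi.single_apply, eq_comm]
    have hisoF : ∀ k l : Fin n, hform (F k) (F l) = 0 := fun k l => hFF k l
    have fact3 : ∀ (a k : Fin n), g (Sum.inl a) (Sum.inr (Sum.inr k)) = 0 := by
      intro a k
      have h := step g H hpF hisoF (Submodule.subset_span (Set.mem_range_self k))
        (Sum.inl a)
      simpa [F, mulVec_single, Pi.single_apply] using h.symm
    have fact4 : ∀ (t : Fin 1) (k : Fin n), g (Sum.inr (Sum.inl t)) (Sum.inr (Sum.inr k)) = 0 := by
      intro t k
      have h := step g H hpF hisoF (Submodule.subset_span (Set.mem_range_self k))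
        (Sum.inr (Sum.inl t))
      simpa [F, mulVec_single, Pi.single_apply] using h.symm
    have fact5 : ∀ (i b : Fin n), b ≠ i → g (Sum.inr (Sum.inr b)) (Sum.inr (Sum.inr i)) = 0 := by
      intro i b hbi
      set u : Fin n → Idx n → ℂ := fun k => if k = i then F i else E k with hu
      set p : Fin n → Idx n := fun k => if k = i then Sum.inr (Sum.inr i) else Sum.inl k with hpdef
      have hp : ∀ k l, u k (p l) = if k = l then 1 else 0 := by
        intro k l
        rcases eq_or_ne k i with hk | hk <;> rcases eq_or_ne l i with hl | hl
        · subst hk; subst hl; simp [hu, hpdef]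
        · subst hk; simp [hu, hpdef, hl, hl.symm, (hl.symm : ¬ (k = l))]
        · subst hl; simp [hu, hpdef, hk, (hk : ¬ (k = l))]
        · simp [hu, hpdef, hk, hl]
      have hiso : ∀ k l, hform (u k) (u l) = 0 := by
        intro k l
        rcases eq_or_ne k i with hk | hk <;> rcases eq_or_ne l i with hl | hl <;>
          simp [hu, hk, hl, hEE, hFF, hEF, hFE, Ne.symm, hEM]
      have hxmem : F i ∈ Submodule.span ℂ (Set.range u) := by
        apply Submodule.subset_span
        exact ⟨i, by simp [hu]⟩
      have h := step g H hp hiso hxmem (Sum.inr (Sum.inr b))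
      rw [Finset.sum_eq_zero] at h
      · simpa [F, mulVec_single, Pi.single_apply] using h.symm
      · intro k _
        rcases eq_or_ne k i with hk | hk <;> simp [hu, hk, hbi, Ne.symm hbi]
    have fact6 : ∀ (i b : Fin n), b ≠ i → g (Sum.inl b) (Sum.inl i) = 0 := by
      intro i b hbi
      set u : Fin n → Idx n → ℂ := fun k => if k = i then E i else F k with hu
      set p : Fin n → Idx n := fun k => if k = i then Sum.inl i else Sum.inr (Sum.inr k) with hpdef
      have hp : ∀ k l, u k (p l) = if k = l then 1 else 0 := by
        intro k l
        rcases eq_or_ne k i with hk | hk <;> rcases eq_or_ne l i with hl | hl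
        · subst hk; subst hl; simp [hu, hpdef]
        · subst hk; simp [hu, hpdef, hl, hl.symm, (hl.symm : ¬ (k = l))]
        · subst hl; simp [hu, hpdef, hk, (hk : ¬ (k = l))]
        · simp [hu, hpdef, hk, hl]
      have hiso : ∀ k l, hform (u k) (u l) = 0 := by
        intro k l
        rcases eq_or_ne k i with hk | hk <;> rcases eq_or_ne l i with hl | hl <;>
          simp [hu, hk, hl, hEE, hFF, hEF, hFE, Ne.symm, hEM]
      have hxmem : E i ∈ Submodule.span ℂ (Set.range u) := by
        apply Submodule.subset_span
        exact ⟨i, by simp [hu]⟩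
      have h := step g H hp hiso hxmem (Sum.inl b)
      rw [Finset.sum_eq_zero] at h
      · simpa [E, mulVec_single, Pi.single_apply] using h.symm
      · intro k _
        rcases eq_or_ne k i with hk | hk <;> simp [hu, hk, hbi, Ne.symm hbi]
    have fact7 : ∀ i : Fin n,
        g (Sum.inr (Sum.inr i)) (Sum.inr (Sum.inr i)) = g (Sum.inl i) (Sum.inl i) := by
      intro i
      set v : Idx n → ℂ := E i + Complex.I • F i with hv
      set u : Fin n → Idx n → ℂ := fun k => if k = i then v else E k with hu
      have hp : ∀ k l : Fin n, u k (Sum.inl l) = if k = l then 1 else 0 := by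
        intro k l
        rcases eq_or_ne k i with hk | hk
        · subst hk; simp [hu, hv]
        · simp [hu, hk]
      have hiso : ∀ k l, hform (u k) (u l) = 0 := by
        have hvv : hform v v = 0 := by
          simp [hv, hform_add_left, hform_add_right, hform_smul_left, hform_smul_right,
            hEE, hEF, hFE, hFF, Complex.star_def, Complex.conj_I]
        have hvE : ∀ l, l ≠ i → hform v (E l) = 0 := by
          intro l hl
          simp [hv, hform_add_left, hform_smul_left, hEE, hFE, Ne.symm hl]
        have hEv : ∀ l, l ≠ i → hform (E l) v = 0 := by
          intro l hl
          simp [hv, hform_add_right, hform_smul_right, hEE, hEF, hl]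
        intro k l
        rcases eq_or_ne k i with hk | hk <;> rcases eq_or_ne l i with hl | hl <;>
          simp [hu, hk, hl, hvv, hvE, hEv, hEE]
      have hxmem : v ∈ Submodule.span ℂ (Set.range u) :=
        Submodule.subset_span ⟨i, by simp [hu]⟩
      have h := step g H hp hiso hxmem (Sum.inr (Sum.inr i))
      rw [Finset.sum_eq_single_of_mem i (Finset.mem_univ i)
        (fun k _ hk => by simp [hu, hk])] at h
      have hgv : ∀ q, (g *ᵥ v) q = g q (Sum.inl i) + Complex.I * g q (Sum.inr (Sum.inr i)) := by
        intro q
        simp [hv, mulVec_add, mulVec_smul, E, F, mulVec_single, Pi.smul_apply, smul_eq_mul]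
      rw [hgv, hgv] at h
      simp [hu, hv, fact2, fact3] at h
      exact mul_left_cancel₀ Complex.I_ne_zero (by linear_combination -h)
    have fact8 : ∀ i j : Fin n, i ≠ j →
        g (Sum.inl j) (Sum.inl j) = g (Sum.inl i) (Sum.inl i) := by
      intro i j hij
      set u : Fin n → Idx n → ℂ :=
        fun k => if k = i then E i + E j else if k = j then F i - F j else E k with hu
      set p : Fin n → Idx n := fun k => if k = j then Sum.inr (Sum.inr i) else Sum.inl k with hpdef
      have hp : ∀ k l : Fin n, u k (p l) = if k = l then 1 else 0 := by
        intro k l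
        by_cases hl : l = j <;> by_cases hk1 : k = i <;> by_cases hk2 : k = j
        · exact absurd (hk1.symm.trans hk2) hij
        · have hkl : ¬ k = l := fun h => hij ((hk1.symm.trans h).trans hl)
          simp [hu, hpdef, hl, hk1, hkl, hij]
        · have hkl : k = l := hk2.trans hl.symm
          simp [hu, hpdef, hl, hk1, hk2, hkl, Ne.symm hij]
        · have hkl : ¬ k = l := fun h => hk2 (h.trans hl)
          simp [hu, hpdef, hl, hk1, hk2, hkl]
        · exact absurd (hk1.symm.trans hk2) hij
        · have hjl : ¬ j = l := fun h => hl h.symm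
          simp [hu, hpdef, hl, hk1, hjl]
        · have hkl : ¬ k = l := fun h => hl (h.symm.trans hk2)
          have hjl : ¬ j = l := fun h => hl h.symm
          simp [hu, hpdef, hl, hk1, hk2, hkl, hjl, Ne.symm hij]
        · simp [hu, hpdef, hl, hk1, hk2]
      have h1 : hform (E i + E j) (E i + E j) = 0 := by
        simp [hform_add_left, hform_add_right, hEE]
      have h2 : hform (E i + E j) (F i - F j) = 0 := by
        simp [hform_add_left, hform_sub_right, hEF, hij, Ne.symm hij]
      have h3 : hform (F i - F j) (E i + E j) = 0 := by
        simp [hform_sub_left, hform_add_right, hFE, hij, Ne.symm hij]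
      have h4 : hform (F i - F j) (F i - F j) = 0 := by
        simp [hform_sub_left, hform_sub_right, hFF]
      have h5 : ∀ k, ¬ k = i → ¬ k = j → hform (E i + E j) (E k) = 0 := by
        intro k _ _; simp [hform_add_left, hEE]
      have h6 : ∀ k, ¬ k = i → ¬ k = j → hform (E k) (E i + E j) = 0 := by
        intro k _ _; simp [hform_add_right, hEE]
      have h7 : ∀ k, ¬ k = i → ¬ k = j → hform (F i - F j) (E k) = 0 := by
        intro k hki hkj; simp [hform_sub_left, hFE, Ne.symm hki, Ne.symm hkj]
      have h8 : ∀ k, ¬ k = i → ¬ k = j → hform (E k) (F i - F j) = 0 := by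
        intro k hki hkj; simp [hform_sub_right, hEF, hki, hkj]
      have hiso : ∀ k l, hform (u k) (u l) = 0 := by
        intro k l
        by_cases hk1 : k = i <;> by_cases hk2 : k = j <;>
          by_cases hl1 : l = i <;> by_cases hl2 : l = j
        · exact absurd (hk1.symm.trans hk2) hij
        · exact absurd (hk1.symm.trans hk2) hij
        · exact absurd (hk1.symm.trans hk2) hij
        · exact absurd (hk1.symm.trans hk2) hij
        · exact absurd (hl1.symm.trans hl2) hij
        · simpa [hu, hk1, hk2, hl1, hl2, hij, Ne.symm hij] using h1
        · simpa [hu, hk1, hk2, hl1, hl2, hij, Ne.symm hij] using h2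
        · simpa [hu, hk1, hk2, hl1, hl2, hij, Ne.symm hij] using h5 l hl1 hl2
        · exact absurd (hl1.symm.trans hl2) hij
        · simpa [hu, hk1, hk2, hl1, hl2, hij, Ne.symm hij] using h3
        · simpa [hu, hk1, hk2, hl1, hl2, hij, Ne.symm hij] using h4
        · simpa [hu, hk1, hk2, hl1, hl2, hij, Ne.symm hij] using h7 l hl1 hl2
        · exact absurd (hl1.symm.trans hl2) hij
        · simpa [hu, hk1, hk2, hl1, hl2, hij, Ne.symm hij] using h6 k hk1 hk2
        · simpa [hu, hk1, hk2, hl1, hl2, hij, Ne.symm hij] using h8 k hk1 hk2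
        · simpa [hu, hk1, hk2, hl1, hl2] using hEE k l
      have hxmem : E i + E j ∈ Submodule.span ℂ (Set.range u) :=
        Submodule.subset_span ⟨i, by simp [hu]⟩
      have h := step g H hp hiso hxmem (Sum.inl j)
      rw [Finset.sum_eq_single_of_mem i (Finset.mem_univ i) ?side] at h
      case side =>
        intro k _ hk
        by_cases hk2 : k = j
        · subst hk2; simp [hu, hk, Ne.symm hij]
        · simp [hu, hk, hk2]
      have hgv : ∀ q, (g *ᵥ (E i + E j)) q = g q (Sum.inl i) + g q (Sum.inl j) := by
        intro q; simp [mulVec_add, E, mulVec_single]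
      rw [hgv, hgv] at h
      simp [hu, hpdef, hij, Ne.symm hij, fact6 j i hij, fact6 i j (Ne.symm hij), fact2] at h
      exact h.symm
    set i0 : Fin n := ⟨0, hn⟩ with hi0
    set m : Idx n := Sum.inr (Sum.inl 0) with hm
    set μ : ℂ := g m m with hμdef
    set α : ℂ := g (Sum.inl i0) (Sum.inl i0) with hα
    -- family A
    set w1 : Idx n → ℂ := Mv + E i0 - (2⁻¹ : ℂ) • F i0 with hw1
    have hw1v : ∀ q, w1 q = Mv q + E i0 q - 2⁻¹ * F i0 q := by intro q; simp [hw1]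
    set uA : Fin n → Idx n → ℂ := fun k => if k = i0 then w1 else E k with huA
    set pA : Fin n → Idx n := fun k => if k = i0 then m else Sum.inl k with hpA
    have hpAp : ∀ k l : Fin n, uA k (pA l) = if k = l then 1 else 0 := by
      intro k l
      by_cases hk : k = i0 <;> by_cases hl : l = i0
      · have : k = l := hk.trans hl.symm
        simp [huA, hpA, hk, hl, this, hw1v, hm]
      · have hkl : ¬ k = l := fun h => hl (h.symm.trans hk)
        have h2 : ¬ i0 = l := fun h => hl h.symm
        simp [huA, hpA, hk, hl, hkl, h2, hw1v]
      · have hkl : ¬ k = l := fun h => hk (h.trans hl)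
        simp [huA, hpA, hk, hl, hkl, hm]
      · simp [huA, hpA, hk, hl]
    have hw1w1 : hform w1 w1 = 0 := by
      simp [hw1, hform_add_left, hform_add_right, hform_sub_left, hform_sub_right,
        hform_smul_left, hform_smul_right, hMM, hME, hMF, hEM, hEE, hEF, hFM, hFE, hFF,
        Complex.star_def]
      norm_num
    have hw1E : ∀ k : Fin n, ¬ k = i0 → hform w1 (E k) = 0 := by
      intro k hk
      have h2 : ¬ i0 = k := fun h => hk h.symm
      simp [hw1, hform_sub_left, hform_add_left, hform_smul_left, hME, hEE, hFE, h2]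
    have hEw1 : ∀ k : Fin n, ¬ k = i0 → hform (E k) w1 = 0 := by
      intro k hk
      simp [hw1, hform_sub_right, hform_add_right, hform_smul_right, hEM, hEE, hEF, hk]
    have hisoA : ∀ k l, hform (uA k) (uA l) = 0 := by
      intro k l
      by_cases hk : k = i0 <;> by_cases hl : l = i0 <;>
        simp [huA, hk, hl, hw1w1, hw1E, hEw1, hEE]
    have hgw1 : ∀ q, (g *ᵥ w1) q
        = g q m + g q (Sum.inl i0) - 2⁻¹ * g q (Sum.inr (Sum.inr i0)) := by
      intro q
      simp [hw1, mulVec_add, mulVec_sub, mulVec_smul, Mv, E, F, mulVec_single, hm]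
    have hw1mem : w1 ∈ Submodule.span ℂ (Set.range uA) :=
      Submodule.subset_span ⟨i0, by simp [huA]⟩
    -- A at (3,b), b ≠ i0
    have factA1 : ∀ b : Fin n, b ≠ i0 → g (Sum.inr (Sum.inr b)) m = 0 := by
      intro b hb
      have h := step g H hpAp hisoA hw1mem (Sum.inr (Sum.inr b))
      rw [Finset.sum_eq_zero] at h
      · have := h.symm
        rw [hgw1] at this
        simpa [fact2, fact5 i0 b hb] using this
      · intro k _
        have h2 : ¬ i0 = b := fun h => hb h.symm
        by_cases hk : k = i0 <;> simp [huA, hk, hw1v, hb, h2]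
    -- A at (3,i0)
    have factA2 : -(2⁻¹ : ℂ) * μ
        = g (Sum.inr (Sum.inr i0)) m - 2⁻¹ * g (Sum.inr (Sum.inr i0)) (Sum.inr (Sum.inr i0)) := by
      have h := step g H hpAp hisoA hw1mem (Sum.inr (Sum.inr i0))
      rw [Finset.sum_eq_single_of_mem i0 (Finset.mem_univ i0)
        (fun k _ hk => by simp [huA, hk])] at h
      rw [hgw1, hgw1] at h
      simp only [huA, hpA, if_pos rfl, hw1v] at h
      simp [fact1, fact2, fact4, fact3, hm] at h
      rw [← hμdef] at h
      linear_combination h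
    -- A at (inl i0)
    have factA3 : μ = g (Sum.inl i0) m + α := by
      have h := step g H hpAp hisoA hw1mem (Sum.inl i0)
      rw [Finset.sum_eq_single_of_mem i0 (Finset.mem_univ i0)
        (fun k _ hk => by
          have h2 : ¬ i0 = k := fun h => hk h.symm
          simp [huA, hk, h2])] at h
      rw [hgw1, hgw1] at h
      simp only [huA, hpA, if_pos rfl, hw1v] at h
      simp [fact1, fact2, fact4, fact3, hm, hα] at h
      rw [← hμdef, ← hα] at h
      linear_combination h
    -- family B
    set uB : Fin n → Idx n → ℂ := fun k => if k = i0 then w1 else F k with huB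
    set pB : Fin n → Idx n := fun k => if k = i0 then m else Sum.inr (Sum.inr k) with hpB
    have hpBp : ∀ k l : Fin n, uB k (pB l) = if k = l then 1 else 0 := by
      intro k l
      by_cases hk : k = i0 <;> by_cases hl : l = i0
      · have : k = l := hk.trans hl.symm
        simp [huB, hpB, hk, hl, this, hw1v, hm]
      · have hkl : ¬ k = l := fun h => hl (h.symm.trans hk)
        have h2 : ¬ i0 = l := fun h => hl h.symm
        simp [huB, hpB, hk, hl, hkl, h2, hw1v]
      · have hkl : ¬ k = l := fun h => hk (h.trans hl)
        simp [huB, hpB, hk, hl, hkl, hm]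
      · simp [huB, hpB, hk, hl]
    have hw1F : ∀ k : Fin n, ¬ k = i0 → hform w1 (F k) = 0 := by
      intro k hk
      have h2 : ¬ i0 = k := fun h => hk h.symm
      simp [hw1, hform_sub_left, hform_add_left, hform_smul_left, hMF, hEF, hFF, h2]
    have hFw1 : ∀ k : Fin n, ¬ k = i0 → hform (F k) w1 = 0 := by
      intro k hk
      simp [hw1, hform_sub_right, hform_add_right, hform_smul_right, hFM, hFE, hFF, hk]
    have hisoB : ∀ k l, hform (uB k) (uB l) = 0 := by
      intro k l
      by_cases hk : k = i0 <;> by_cases hl : l = i0 <;>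
        simp [huB, hk, hl, hw1w1, hw1F, hFw1, hFF]
    have hw1memB : w1 ∈ Submodule.span ℂ (Set.range uB) :=
      Submodule.subset_span ⟨i0, by simp [huB]⟩
    have factB : ∀ k : Fin n, k ≠ i0 → g (Sum.inl k) m = 0 := by
      intro b hb
      have h := step g H hpBp hisoB hw1memB (Sum.inl b)
      rw [Finset.sum_eq_zero] at h
      · have := h.symm
        rw [hgw1] at this
        simpa [fact3, fact6 i0 b hb] using this
      · intro k _
        have h2 : ¬ i0 = b := fun h => hb h.symm
        by_cases hk : k = i0 <;> simp [huB, hk, hw1v, hb, h2]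
    -- family C
    set w2 : Idx n → ℂ := Mv + Complex.I • E i0 - (Complex.I * 2⁻¹) • F i0 with hw2
    have hw2v : ∀ q, w2 q = Mv q + Complex.I * E i0 q - Complex.I * 2⁻¹ * F i0 q := by
      intro q; simp [hw2]
    set uC : Fin n → Idx n → ℂ := fun k => if k = i0 then w2 else E k with huC
    have hpCp : ∀ k l : Fin n, uC k (pA l) = if k = l then 1 else 0 := by
      intro k l
      by_cases hk : k = i0 <;> by_cases hl : l = i0
      · have : k = l := hk.trans hl.symm
        simp [huC, hpA, hk, hl, this, hw2v, hm]
      · have hkl : ¬ k = l := fun h => hl (h.symm.trans hk)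
        have h2 : ¬ i0 = l := fun h => hl h.symm
        simp [huC, hpA, hk, hl, hkl, h2, hw2v]
      · have hkl : ¬ k = l := fun h => hk (h.trans hl)
        simp [huC, hpA, hk, hl, hkl, hm]
      · simp [huC, hpA, hk, hl]
    have hw2w2 : hform w2 w2 = 0 := by
      simp [hw2, hform_add_left, hform_add_right, hform_sub_left, hform_sub_right,
        hform_smul_left, hform_smul_right, hMM, hME, hMF, hEM, hEE, hEF, hFM, hFE, hFF,
        Complex.star_def, Complex.conj_I]
      ring_nf
      simp [Complex.ext_iff]
    have hw2E : ∀ k : Fin n, ¬ k = i0 → hform w2 (E k) = 0 := by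
      intro k hk
      have h2 : ¬ i0 = k := fun h => hk h.symm
      simp [hw2, hform_sub_left, hform_add_left, hform_smul_left, hME, hEE, hFE, h2]
    have hEw2 : ∀ k : Fin n, ¬ k = i0 → hform (E k) w2 = 0 := by
      intro k hk
      simp [hw2, hform_sub_right, hform_add_right, hform_smul_right, hEM, hEE, hEF, hk]
    have hisoC : ∀ k l, hform (uC k) (uC l) = 0 := by
      intro k l
      by_cases hk : k = i0 <;> by_cases hl : l = i0 <;>
        simp [huC, hk, hl, hw2w2, hw2E, hEw2, hEE]
    have hgw2 : ∀ q, (g *ᵥ w2) q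
        = g q m + Complex.I * g q (Sum.inl i0)
          - Complex.I * 2⁻¹ * g q (Sum.inr (Sum.inr i0)) := by
      intro q
      simp [hw2, mulVec_add, mulVec_sub, mulVec_smul, Mv, E, F, mulVec_single, hm]
    have hw2mem : w2 ∈ Submodule.span ℂ (Set.range uC) :=
      Submodule.subset_span ⟨i0, by simp [huC]⟩
    have factC : -(Complex.I * 2⁻¹) * μ
        = g (Sum.inr (Sum.inr i0)) m
          - Complex.I * 2⁻¹ * g (Sum.inr (Sum.inr i0)) (Sum.inr (Sum.inr i0)) := by
      have h := step g H hpCp hisoC hw2mem (Sum.inr (Sum.inr i0))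
      rw [Finset.sum_eq_single_of_mem i0 (Finset.mem_univ i0)
        (fun k _ hk => by simp [huC, hk])] at h
      rw [hgw2, hgw2] at h
      simp only [huC, hpA, if_pos rfl, hw2v] at h
      simp [fact1, fact2, fact4, fact3, hm] at h
      rw [← hμdef] at h
      linear_combination h
    -- combine A2 and C : μ = γ i0 = α
    set γ : ℂ := g (Sum.inr (Sum.inr i0)) (Sum.inr (Sum.inr i0)) with hγ
    have hμγ : μ = γ := by
      have key : (1 - Complex.I) * (γ - μ) = 0 := by
        linear_combination 2 * factA2 - 2 * factC
      have h1I : (1 : ℂ) - Complex.I ≠ 0 := by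
        intro h
        have := congrArg Complex.re h
        simp at this
      rcases mul_eq_zero.mp key with h | h
      · exact absurd h h1I
      · linear_combination -h
    have hμα : μ = α := by rw [hμγ, hγ, hα]; exact fact7 i0
    have hgm3 : g (Sum.inr (Sum.inr i0)) m = 0 := by
      linear_combination -factA2 - 2⁻¹ * hμγ
    have hgm1 : g (Sum.inl i0) m = 0 := by
      linear_combination hμα - factA3
    -- final assembly
    have diag1 : ∀ a : Fin n, g (Sum.inl a) (Sum.inl a) = μ := by
      intro a
      rcases eq_or_ne a i0 with rfl | ha
      · exact hμα.symm
      · rw [fact8 i0 a (Ne.symm ha)]; exact hμα.symm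
    have diag3 : ∀ a : Fin n, g (Sum.inr (Sum.inr a)) (Sum.inr (Sum.inr a)) = μ := by
      intro a; rw [fact7 a]; exact diag1 a
    have hgeq : g = μ • (1 : Matrix (Idx n) (Idx n) ℂ) := by
      ext i j
      rw [Matrix.smul_apply, Matrix.one_apply]
      rcases i with a | t | a <;> rcases j with b | s | b
      · rcases eq_or_ne a b with rfl | hab
        · simp [diag1 a]
        · simp [hab, fact6 b a hab]
      · have hs : s = 0 := Subsingleton.elim s 0
        subst hs
        rcases eq_or_ne a i0 with rfl | ha
        · simpa [hm] using hgm1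
        · simpa [hm] using factB a ha
      · simp [fact3]
      · simp [fact1]
      · have hs : s = 0 := Subsingleton.elim s 0
        have ht : t = 0 := Subsingleton.elim t 0
        subst hs; subst ht
        simpa [hm] using hμdef.symm
      · simp [fact4]
      · simp [fact2]
      · have hs : s = 0 := Subsingleton.elim s 0
        subst hs
        rcases eq_or_ne a i0 with rfl | ha
        · simpa [hm] using hgm3
        · simpa [hm] using factA1 a ha
      · rcases eq_or_ne a b with rfl | hab
        · simp [diag3 a]
        · simp [hab, fact5 b a hab]
    refine ⟨μ, ?_, hgeq⟩
    rw [hgeq] at hdet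
    rw [Matrix.det_smul, Matrix.det_one, mul_one] at hdet
    have hcard : Fintype.card (Idx n) = 2 * n + 1 := by
      simp [Fintype.card_sum, Fintype.card_fin]
      omega
    rwa [hcard] at hdet
  · rintro ⟨β, hβ, rfl⟩
    have hβ0 : β ≠ 0 := by
      intro h; rw [h] at hβ; simp at hβ
    intro V _ _
    have hmv : ∀ x : Idx n → ℂ,
        Matrix.mulVecLin (β • (1 : Matrix (Idx n) (Idx n) ℂ)) x = β • x := by
      intro x
      simp [Matrix.mulVecLin_apply, smul_mulVec]
    apply le_antisymm
    · rintro y ⟨x, hx, rfl⟩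
      rw [hmv]
      exact V.smul_mem β hx
    · intro x hx
      exact ⟨β⁻¹ • x, V.smul_mem _ hx, by rw [hmv, smul_smul, mul_inv_cancel₀ hβ0, one_smul]⟩
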